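/- arXiv:1905.12944 — 2 statements merged into one kernel-verified Lean document; each statement's English description precedes it below -/
import Mathlib

section
/- The lifted heap disjunction ‖ on Option (Finset (V × V)) is associative: for all x, y, z, (x ‖ y) ‖ z = x ‖ (y ‖ z). -/
variable {V : Type*}

/-- The vertex set of a finite directed edge set. -/
noncomputable def verts [DecidableEq V] (E : Finset (V × V)) : Finset V :=
  E.image Prod.fst ∪ E.image Prod.snd

open scoped Classical in
/-- Heap disjunction lifted to possibly-inconsistent heaps. -/
noncomputable def hdisj [DecidableEq V] :
    Option (Finset (V × V)) → Option (Finset (V × V)) → Option (Finset (V × V))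
  | some E₁, some E₂ => if Disjoint (verts E₁) (verts E₂) then some (E₁ ∪ E₂) else none
  | none, _ => none
  | _, none => none

lemma verts_union [DecidableEq V] (E₁ E₂ : Finset (V × V)) :
    verts (E₁ ∪ E₂) = verts E₁ ∪ verts E₂ := by
  simp [verts, Finset.image_union]; ac_rfl

lemma hdisj_none_right [DecidableEq V] (x : Option (Finset (V × V))) :
    hdisj x none = none := by cases x <;> rfl

lemma hdisj_none_left [DecidableEq V] (x : Option (Finset (V × V))) :
    hdisj none x = none := by cases x <;> rfl

theorem hdisj_assoc [DecidableEq V] (x y z : Option (Finset (V × V))) :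
    hdisj (hdisj x y) z = hdisj x (hdisj y z) := by
  classical
  obtain _ | a := x <;> obtain _ | b := y <;> obtain _ | c := z <;>
    (try simp only [hdisj_none_right, hdisj_none_left])
  case some.some.some =>
    by_cases h1 : Disjoint (verts a) (verts b) <;>
    by_cases h2 : Disjoint (verts b) (verts c) <;>
      simp_all [hdisj, verts_union, Finset.union_assoc, Finset.disjoint_union_left,
        Finset.disjoint_union_right]
end

section
/- The lifted heap disjunction ‖ on Option (Finset (V × V)) is commutative and has the empty heap emp = some ∅ as a two-sided identity: for all x and y, x ‖ y = y ‖ x, emp ‖ x = x, and x ‖ emp = x. -/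
variable {V : Type*}

/-- The empty heap. -/
def emp : Option (Finset (V × V)) := some ∅

theorem hdisj_comm_id [DecidableEq V] :
    (∀ x y : Option (Finset (V × V)), hdisj x y = hdisj y x) ∧
      (∀ x : Option (Finset (V × V)), hdisj emp x = x) ∧
      (∀ x : Option (Finset (V × V)), hdisj x emp = x) := by
  refine ⟨?_, ?_, ?_⟩
  · rintro (_|E₁) (_|E₂) <;> simp [hdisj]
    by_cases h : Disjoint (verts E₁) (verts E₂)
    · simp [h, disjoint_comm.mp h, Finset.union_comm]
    · rw [if_neg h, if_neg (fun h' => h (disjoint_comm.mp h'))]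
  · rintro (_|E) <;> simp [hdisj, emp, verts]
  · rintro (_|E) <;> simp [hdisj, emp, verts]
end
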